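/- A priori bound on the reduced density matrix series: under the assumptions that ‖W_s‖ < ∞, ‖ρ_s(0)‖ < ∞, and |B(τ,τ')| ≤ B̄, the series ρ_s(t) = Σ_{m even} (over ordered time points −t < s_1 < ··· < s_m < t) of terms each bounded in norm by ‖ρ_s(0)‖·‖W_s‖^m·(m−1)!!·B̄^{m/2}·(2t)^m/m! converges absolutely, and ‖ρ_s(t)‖ ≤ ‖ρ_s(0)‖·exp(2t²‖W_s‖² B̄). -/

import Mathlib

open scoped Nat

lemma doubleFact_key (k : ℕ) : (2 * k).factorial = 2 ^ k * k.factorial * (2 * k - 1)‼ := by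
  cases k with
  | zero => rfl
  | succ k =>
    have h1 : 2 * (k + 1) = (2 * k + 1) + 1 := by ring
    have h2 : 2 * (k + 1) - 1 = 2 * k + 1 := by omega
    rw [h1, Nat.factorial_eq_mul_doubleFactorial, ← h1, h2,
      show (2 * (k + 1))‼ = (2 * (k + 1))‼ from rfl, Nat.doubleFactorial_two_mul]

lemma even_term_eq (t ρ0 Ws Bbar : ℝ) (k : ℕ) :
    ρ0 * Ws ^ (2 * k) * (((2 * k - 1)‼ : ℕ) : ℝ) * Bbar ^ k * (2 * t) ^ (2 * k) /
      ((2 * k).factorial : ℝ) = ρ0 * (2 * t ^ 2 * Ws ^ 2 * Bbar) ^ k / (k.factorial : ℝ) := by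
  have hF : (((2 * k).factorial : ℕ) : ℝ) =
      2 ^ k * (k.factorial : ℝ) * (((2 * k - 1)‼ : ℕ) : ℝ) := by
    exact_mod_cast congrArg (Nat.cast : ℕ → ℝ) (doubleFact_key k)
  have hD : (0 : ℝ) < (((2 * k - 1)‼ : ℕ) : ℝ) := by
    exact_mod_cast Nat.doubleFactorial_pos _
  have hK : (0 : ℝ) < (k.factorial : ℝ) := by exact_mod_cast k.factorial_pos
  rw [hF]
  rw [mul_pow (2 * t ^ 2 * Ws ^ 2) Bbar, mul_pow (2 * t ^ 2) (Ws ^ 2),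
    mul_pow (2 : ℝ) (t ^ 2), ← pow_mul Ws 2, ← pow_mul t 2, mul_pow (2 : ℝ) t]
  field_simp
  ring

/-- A priori bound on the reduced density matrix series: if the `m`-th term of the Dyson
series is bounded in norm by `‖ρ_s(0)‖·‖W_s‖^m·(m−1)!!·B̄^{m/2}·(2t)^m/m!` for even `m` and
vanishes for odd `m`, then the series converges absolutely and
`‖ρ_s(t)‖ ≤ ‖ρ_s(0)‖·exp(2t²‖W_s‖²B̄)`. -/
theorem reduced_density_matrix_a_priori_bound {A : Type*} [NormedAddCommGroup A]
    [CompleteSpace A] (t ρ0 Ws Bbar : ℝ) (ht : 0 ≤ t) (hρ0 : 0 ≤ ρ0) (hWs : 0 ≤ Ws)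
    (hB : 0 ≤ Bbar) (term : ℕ → A)
    (hbound : ∀ m : ℕ, Even m →
      ‖term m‖ ≤ ρ0 * Ws ^ m * (((m - 1)‼ : ℕ) : ℝ) * Bbar ^ (m / 2) * (2 * t) ^ m /
        (m.factorial : ℝ))
    (hodd : ∀ m : ℕ, ¬ Even m → term m = 0) :
    Summable term ∧ ‖∑' m : ℕ, term m‖ ≤ ρ0 * Real.exp (2 * t ^ 2 * Ws ^ 2 * Bbar) := by
  set x : ℝ := 2 * t ^ 2 * Ws ^ 2 * Bbar with hx
  set g : ℕ → ℝ := fun m => if Even m then ρ0 * x ^ (m / 2) / ((m / 2).factorial : ℝ) else 0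
    with hg
  have hxnn : 0 ≤ x := by positivity
  -- pointwise bound ‖term m‖ ≤ g m
  have hptw : ∀ m, ‖term m‖ ≤ g m := by
    intro m
    by_cases hm : Even m
    · obtain ⟨k, hk⟩ := hm
      have hm2 : m = 2 * k := by omega
      have := hbound m ⟨k, hk⟩
      rw [hm2] at this ⊢
      simp only [hg, if_pos (even_two_mul k), Nat.mul_div_cancel_left k (by norm_num : 0 < 2)]
      calc ‖term (2 * k)‖ ≤ _ := this
        _ = ρ0 * x ^ k / (k.factorial : ℝ) := by
            rw [show (2 * k) / 2 = k from Nat.mul_div_cancel_left k (by norm_num)]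
            exact even_term_eq t ρ0 Ws Bbar k
    · simp [hg, hm, hodd m hm]
  -- g has sum ρ0 * exp x
  have hge : ∀ k : ℕ, g (2 * k) = ρ0 * x ^ k / (k.factorial : ℝ) := by
    intro k
    simp [hg, even_two_mul k, Nat.mul_div_cancel_left k (by norm_num : 0 < 2)]
  have hgo : ∀ k : ℕ, g (2 * k + 1) = 0 := by
    intro k
    simp [hg, Nat.even_add_one, Nat.not_even_iff_odd, even_two_mul k, parity_simps]
  have hexp : HasSum (fun k : ℕ => ρ0 * x ^ k / (k.factorial : ℝ)) (ρ0 * Real.exp x) := by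
    have h1 : HasSum (fun k : ℕ => x ^ k / (k.factorial : ℝ)) (Real.exp x) := by
      have hs := (Real.summable_pow_div_factorial x).hasSum
      have : Real.exp x = ∑' k : ℕ, x ^ k / (k.factorial : ℝ) := by
        rw [Real.exp_eq_exp_ℝ, NormedSpace.exp_eq_tsum_div]
      rwa [this]
    have := h1.mul_left ρ0
    simpa [mul_div_assoc] using this
  have hgsum : HasSum g (ρ0 * Real.exp x) := by
    have he : HasSum (fun k => g (2 * k)) (ρ0 * Real.exp x) := by
      simpa [hge] using hexp
    have ho : HasSum (fun k => g (2 * k + 1)) 0 := by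
      simpa [hgo] using hasSum_zero
    simpa using he.even_add_odd ho
  have hsummable : Summable term :=
    Summable.of_norm_bounded hgsum.summable hptw
  refine ⟨hsummable, ?_⟩
  calc ‖∑' m, term m‖ ≤ ∑' m, ‖term m‖ := norm_tsum_le_tsum_norm (hgsum.summable.of_nonneg_of_le (fun _ => norm_nonneg _) hptw)
    _ ≤ ∑' m, g m := Summable.tsum_le_tsum hptw (hgsum.summable.of_nonneg_of_le (fun _ => norm_nonneg _) hptw) hgsum.summable
    _ = ρ0 * Real.exp x := hgsum.tsum_eq
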